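/- arXiv:2109.03850 — 5 statements merged into one kernel-verified Lean document; each statement's English description precedes it below -/
import Mathlib

section
/- Let Δ be a reducible root system of rank at least 3 in a Euclidean space, written as an orthogonal direct sum Δ = Δ₁ ⊕ Δ₂ with rank Δ₁ ≥ 2, and fix a set of simple roots Π. Then there exists a positive root λ (one can take λ a simple root of Δ₁) such that for every positive root μ there is a positive root ν with ⟨λ + μ, ν⟩ ≤ 0. -/
open RealInnerProductSpace Finset Classical in

/-- For a reducible crystallographic root system `Δ = Δ₁ ⊕ Δ₂` of rank ≥ 3
with `rank Δ₁ ≥ 2`, and simple roots `Π` (the positive roots that are not sums of two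
positive roots), there is a positive root `λ`, which can be taken to be a simple root
belonging to `Δ₁`, such that for every positive root `μ` there is a positive root `ν`
with `⟨λ + μ, ν⟩ ≤ 0`. -/
theorem stmt1
    {V : Type*} [NormedAddCommGroup V] [InnerProductSpace ℝ V] [FiniteDimensional ℝ V]
    (Δ Δ₁ Δ₂ : Finset V) (h0 : (0 : V) ∉ Δ)
    (hunion : Δ = Δ₁ ∪ Δ₂) (hdisj : Disjoint Δ₁ Δ₂)
    (hne₁ : Δ₁.Nonempty) (hne₂ : Δ₂.Nonempty)
    (horth : ∀ α ∈ Δ₁, ∀ β ∈ Δ₂, ⟪α, β⟫ = 0)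
    (hrefl : ∀ α ∈ Δ, ∀ β ∈ Δ, β - (2 * ⟪β, α⟫ / ⟪α, α⟫) • α ∈ Δ)
    (hcrys : ∀ α ∈ Δ, ∀ β ∈ Δ, ∃ n : ℤ, 2 * ⟪β, α⟫ / ⟪α, α⟫ = (n : ℝ))
    (hrank : 3 ≤ Module.finrank ℝ (Submodule.span ℝ (Δ : Set V)))
    (hrank₁ : 2 ≤ Module.finrank ℝ (Submodule.span ℝ (Δ₁ : Set V)))
    (f : V →ₗ[ℝ] ℝ) (hf : ∀ α ∈ Δ, f α ≠ 0)
    (Δp : Finset V) (hΔp : Δp = Δ.filter (fun α => 0 < f α))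
    (Pi : Finset V)
    (hPi : Pi = Δp.filter (fun α => ¬ ∃ β ∈ Δp, ∃ γ ∈ Δp, α = β + γ)) :
    ∃ l ∈ Δp, l ∈ Pi ∧ l ∈ Δ₁ ∧
      ∀ μ ∈ Δp, ∃ ν ∈ Δp, ⟪l + μ, ν⟫ ≤ 0 := by
  have hΔpΔ : Δp ⊆ Δ := by rw [hΔp]; exact Finset.filter_subset _ _
  have hΔpPos : ∀ α ∈ Δp, 0 < f α := by
    intro α hα; rw [hΔp, Finset.mem_filter] at hα; exact hα.2
  have hmemΔp : ∀ α ∈ Δ, 0 < f α → α ∈ Δp := by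
    intro α hα hpos; rw [hΔp, Finset.mem_filter]; exact ⟨hα, hpos⟩
  have hPiΔp : Pi ⊆ Δp := by rw [hPi]; exact Finset.filter_subset _ _
  have hnz : ∀ α ∈ Δ, α ≠ 0 := fun α hα h => h0 (h ▸ hα)
  have hmem1 : ∀ α ∈ Δ₁, α ∈ Δ := fun α hα => by
    rw [hunion]; exact Finset.mem_union_left _ hα
  have hmem2 : ∀ α ∈ Δ₂, α ∈ Δ := fun α hα => by
    rw [hunion]; exact Finset.mem_union_right _ hα
  have hneg : ∀ α ∈ Δ, -α ∈ Δ := by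
    intro α hα
    have hip : ⟪α, α⟫ ≠ (0:ℝ) := fun h => hnz α hα (inner_self_eq_zero.mp h)
    have h := hrefl α hα α hα
    rw [show 2 * ⟪α, α⟫ / ⟪α, α⟫ = (2:ℝ) by field_simp] at h
    have h2 : α - (2:ℝ) • α = -α := by module
    rwa [h2] at h
  have hneg1 : ∀ α ∈ Δ₁, -α ∈ Δ₁ := by
    intro α hα
    have h := hneg α (hmem1 α hα)
    rw [hunion, Finset.mem_union] at h
    rcases h with h | h
    · exact h
    · exfalso
      have h1 := horth α hα (-α) h
      rw [inner_neg_right] at h1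
      have h2 : ⟪α, α⟫ = (0:ℝ) := by linarith
      exact hnz α (hmem1 α hα) (inner_self_eq_zero.mp h2)
  have hneg2 : ∀ α ∈ Δ₂, -α ∈ Δ₂ := by
    intro α hα
    have h := hneg α (hmem2 α hα)
    rw [hunion, Finset.mem_union] at h
    rcases h with h | h
    · exfalso
      have h1 := horth (-α) h α hα
      rw [inner_neg_left] at h1
      have h2 : ⟪α, α⟫ = (0:ℝ) := by linarith
      exact hnz α (hmem2 α hα) (inner_self_eq_zero.mp h2)
    · exact h
  have hnu : ∃ ν ∈ Δp, ν ∈ Δ₂ := by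
    obtain ⟨α, hα⟩ := hne₂
    rcases lt_or_gt_of_ne (hf α (hmem2 α hα)) with h | h
    · refine ⟨-α, hmemΔp _ (hneg α (hmem2 α hα)) ?_, hneg2 α hα⟩
      rw [map_neg]; linarith
    · exact ⟨α, hmemΔp _ (hmem2 α hα) h, hα⟩
  have hsum1 : ∀ α ∈ Δ₁, ∀ β ∈ Δp, ∀ γ ∈ Δp, α = β + γ → β ∈ Δ₁ ∧ γ ∈ Δ₁ := by
    intro α hα β hβ γ hγ he
    have hβu : β ∈ Δ₁ ∪ Δ₂ := by rw [← hunion]; exact hΔpΔ hβ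
    have hγu : γ ∈ Δ₁ ∪ Δ₂ := by rw [← hunion]; exact hΔpΔ hγ
    rw [Finset.mem_union] at hβu hγu
    rcases hβu with hβ1 | hβ2
    · rcases hγu with hγ1 | hγ2
      · exact ⟨hβ1, hγ1⟩
      · exfalso
        have h1 : ⟪α, γ⟫ = (0:ℝ) := horth α hα γ hγ2
        have h2 : ⟪β, γ⟫ = (0:ℝ) := horth β hβ1 γ hγ2
        have h3 : ⟪β + γ, γ⟫ = ⟪β, γ⟫ + ⟪γ, γ⟫ := inner_add_left _ _ _
        rw [← he, h1, h2] at h3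
        have h4 : ⟪γ, γ⟫ = (0:ℝ) := by linarith
        exact hnz γ (hΔpΔ hγ) (inner_self_eq_zero.mp h4)
    · rcases hγu with hγ1 | hγ2
      · exfalso
        have h1 : ⟪α, β⟫ = (0:ℝ) := horth α hα β hβ2
        have h2 : ⟪γ, β⟫ = (0:ℝ) := horth γ hγ1 β hβ2
        have h3 : ⟪β + γ, β⟫ = ⟪β, β⟫ + ⟪γ, β⟫ := by
          rw [inner_add_left]
        rw [← he] at h3
        have h4 : ⟪β, β⟫ = (0:ℝ) := by linarith
        exact hnz β (hΔpΔ hβ) (inner_self_eq_zero.mp h4)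
      · exfalso
        have h1 : ⟪α, β⟫ = (0:ℝ) := horth α hα β hβ2
        have h2 : ⟪α, γ⟫ = (0:ℝ) := horth α hα γ hγ2
        have h3 : ⟪α, β + γ⟫ = ⟪α, β⟫ + ⟪α, γ⟫ := inner_add_right _ _ _
        rw [← he, h1, h2] at h3
        have h4 : ⟪α, α⟫ = (0:ℝ) := by linarith
        exact hnz α (hmem1 α hα) (inner_self_eq_zero.mp h4)
  -- every positive root of Δ₁ is in the span of the simple roots lying in Δ₁
  have key : ∀ n : ℕ, ∀ α ∈ Δp, α ∈ Δ₁ →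
      (Δp.filter (fun β => f β < f α)).card ≤ n →
      α ∈ Submodule.span ℝ ((Pi ∩ Δ₁ : Finset V) : Set V) := by
    intro n
    induction n with
    | zero =>
      intro α hα hα1 hcard
      by_cases hs : α ∈ Pi
      · exact Submodule.subset_span (by simp [Finset.mem_inter, hs, hα1])
      · exfalso
        have hex : ∃ β ∈ Δp, ∃ γ ∈ Δp, α = β + γ := by
          by_contra h
          exact hs (by rw [hPi, Finset.mem_filter]; exact ⟨hα, h⟩)
        obtain ⟨β, hβ, γ, hγ, he⟩ := hex
        have hfa : f α = f β + f γ := by rw [he, map_add]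
        have hβlt : f β < f α := by linarith [hΔpPos γ hγ]
        have hm : β ∈ Δp.filter (fun b => f b < f α) :=
          Finset.mem_filter.mpr ⟨hβ, hβlt⟩
        have := Finset.card_pos.mpr ⟨β, hm⟩
        omega
    | succ n ih =>
      intro α hα hα1 hcard
      by_cases hs : α ∈ Pi
      · exact Submodule.subset_span (by simp [Finset.mem_inter, hs, hα1])
      · have hex : ∃ β ∈ Δp, ∃ γ ∈ Δp, α = β + γ := by
          by_contra h
          exact hs (by rw [hPi, Finset.mem_filter]; exact ⟨hα, h⟩)
        obtain ⟨β, hβ, γ, hγ, he⟩ := hex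
        obtain ⟨hβ1, hγ1⟩ := hsum1 α hα1 β hβ γ hγ he
        have hfa : f α = f β + f γ := by rw [he, map_add]
        have hβlt : f β < f α := by linarith [hΔpPos γ hγ]
        have hγlt : f γ < f α := by linarith [hΔpPos β hβ]
        have hsubβ : Δp.filter (fun b => f b < f β) ⊂ Δp.filter (fun b => f b < f α) := by
          refine (Finset.ssubset_iff_of_subset ?_).mpr ⟨β, Finset.mem_filter.mpr ⟨hβ, hβlt⟩, by simp⟩
          intro x hx
          rw [Finset.mem_filter] at hx ⊢
          exact ⟨hx.1, lt_trans hx.2 hβlt⟩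
        have hsubγ : Δp.filter (fun b => f b < f γ) ⊂ Δp.filter (fun b => f b < f α) := by
          refine (Finset.ssubset_iff_of_subset ?_).mpr ⟨γ, Finset.mem_filter.mpr ⟨hγ, hγlt⟩, by simp⟩
          intro x hx
          rw [Finset.mem_filter] at hx ⊢
          exact ⟨hx.1, lt_trans hx.2 hγlt⟩
        have hcβ : (Δp.filter (fun b => f b < f β)).card ≤ n := by
          have := Finset.card_lt_card hsubβ; omega
        have hcγ : (Δp.filter (fun b => f b < f γ)).card ≤ n := by
          have := Finset.card_lt_card hsubγ; omega
        rw [he]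
        exact Submodule.add_mem _ (ih β hβ hβ1 hcβ) (ih γ hγ hγ1 hcγ)
  have hspan : ∀ α ∈ Δ₁, (α : V) ∈ Submodule.span ℝ ((Pi ∩ Δ₁ : Finset V) : Set V) := by
    intro α hα
    rcases lt_or_gt_of_ne (hf α (hmem1 α hα)) with h | h
    · have h1 := key _ (-α) (hmemΔp _ (hneg _ (hmem1 α hα)) (by rw [map_neg]; linarith))
        (hneg1 α hα) le_rfl
      simpa using Submodule.neg_mem _ h1
    · exact key _ α (hmemΔp _ (hmem1 α hα) h) hα le_rfl
  have hle : Submodule.span ℝ ((Δ₁ : Finset V) : Set V) ≤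
      Submodule.span ℝ ((Pi ∩ Δ₁ : Finset V) : Set V) := by
    rw [Submodule.span_le]
    intro x hx
    exact hspan x hx
  have hcard2 : 1 < (Pi ∩ Δ₁).card := by
    by_contra h
    push_neg at h
    have h1 : Module.finrank ℝ (Submodule.span ℝ ((Pi ∩ Δ₁ : Finset V) : Set V)) ≤ (Pi ∩ Δ₁).card :=
      finrank_span_finset_le_card (R := ℝ) (Pi ∩ Δ₁)
    have h2 := Submodule.finrank_mono hle
    omega
  -- distinct simple roots have nonpositive inner product
  have hD : ∀ l ∈ Pi, ∀ l' ∈ Pi, l ≠ l' → ⟪l, l'⟫ ≤ 0 := by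
    intro l hl l' hl' hne
    by_contra hpos
    push_neg at hpos
    have hlΔ : l ∈ Δ := hΔpΔ (hPiΔp hl)
    have hl'Δ : l' ∈ Δ := hΔpΔ (hPiΔp hl')
    have ha : 0 < ⟪l, l⟫ := lt_of_le_of_ne real_inner_self_nonneg
      (fun h => hnz l hlΔ (inner_self_eq_zero.mp h.symm))
    have hb : 0 < ⟪l', l'⟫ := lt_of_le_of_ne real_inner_self_nonneg
      (fun h => hnz l' hl'Δ (inner_self_eq_zero.mp h.symm))
    have hcomm : ⟪l, l'⟫ = ⟪l', l⟫ := real_inner_comm l' l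
    obtain ⟨n, hn⟩ := hcrys l' hl'Δ l hlΔ
    obtain ⟨m, hm⟩ := hcrys l hlΔ l' hl'Δ
    have hn1 : 1 ≤ n := by
      have hr : (0:ℝ) < (n:ℝ) := by
        rw [← hn]; exact div_pos (by linarith) hb
      exact_mod_cast (by exact_mod_cast hr : (0:ℤ) < n)
    have hm1 : 1 ≤ m := by
      have hr : (0:ℝ) < (m:ℝ) := by
        rw [← hm]; exact div_pos (by linarith) ha
      exact_mod_cast (by exact_mod_cast hr : (0:ℤ) < m)
    have hdiff : l - l' ∈ Δ := by
      rcases eq_or_lt_of_le hn1 with h1 | h2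
      · have h := hrefl l' hl'Δ l hlΔ
        rw [hn, ← h1] at h
        simpa using h
      · rcases eq_or_lt_of_le hm1 with h1' | h2'
        · have h := hrefl l hlΔ l' hl'Δ
          rw [hm, ← h1'] at h
          have h' : l' - l ∈ Δ := by simpa using h
          have := hneg _ h'
          simpa [neg_sub] using this
        · exfalso
          have hcb : ⟪l', l'⟫ ≤ ⟪l, l'⟫ := by
            have h2r : (2:ℝ) ≤ 2 * ⟪l, l'⟫ / ⟪l', l'⟫ := by
              rw [hn]; exact_mod_cast h2
            rw [le_div_iff₀ hb] at h2r
            linarith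
          have hca : ⟪l, l⟫ ≤ ⟪l, l'⟫ := by
            have h2r : (2:ℝ) ≤ 2 * ⟪l', l⟫ / ⟪l, l⟫ := by
              rw [hm]; exact_mod_cast h2'
            rw [le_div_iff₀ ha] at h2r
            linarith
          have hexp : ⟪l - l', l - l'⟫ = ⟪l, l⟫ - 2 * ⟪l, l'⟫ + ⟪l', l'⟫ := by
            rw [inner_sub_left, inner_sub_right, inner_sub_right, hcomm]
            ring
          have hz : ⟪l - l', l - l'⟫ ≤ 0 := by rw [hexp]; linarith [hcomm]
          have hzz : l - l' = 0 :=
            inner_self_eq_zero.mp (le_antisymm hz real_inner_self_nonneg)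
          exact hne (sub_eq_zero.mp hzz)
    rcases lt_or_gt_of_ne (hf _ hdiff) with h | h
    · have hmem : l' - l ∈ Δp := by
        refine hmemΔp _ (by simpa [neg_sub] using hneg _ hdiff) ?_
        rw [map_sub]
        rw [map_sub] at h
        linarith
      have hPl' : ¬ ∃ β ∈ Δp, ∃ γ ∈ Δp, l' = β + γ := by
        rw [hPi, Finset.mem_filter] at hl'
        exact hl'.2
      exact hPl' ⟨l' - l, hmem, l, hPiΔp hl, by abel⟩
    · have hmem : l - l' ∈ Δp := hmemΔp _ hdiff h
      have hPl : ¬ ∃ β ∈ Δp, ∃ γ ∈ Δp, l = β + γ := by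
        rw [hPi, Finset.mem_filter] at hl
        exact hl.2
      exact hPl ⟨l - l', hmem, l', hPiΔp hl', by abel⟩
  obtain ⟨l, hlmem, l', hl'mem, hll'⟩ := Finset.one_lt_card.mp hcard2
  rw [Finset.mem_inter] at hlmem hl'mem
  obtain ⟨ν₂, hν₂p, hν₂2⟩ := hnu
  refine ⟨l, hPiΔp hlmem.1, hlmem.1, hlmem.2, ?_⟩
  intro μ hμ
  have hμu : μ ∈ Δ₁ ∪ Δ₂ := by rw [← hunion]; exact hΔpΔ hμ
  rw [Finset.mem_union] at hμu
  rcases hμu with h1 | h2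
  · refine ⟨ν₂, hν₂p, ?_⟩
    rw [inner_add_left, horth l hlmem.2 ν₂ hν₂2, horth μ h1 ν₂ hν₂2]
    norm_num
  · refine ⟨l', hPiΔp hl'mem.1, ?_⟩
    have h3 : ⟪μ, l'⟫ = (0:ℝ) := by
      rw [real_inner_comm]; exact horth l' hl'mem.2 μ h2
    rw [inner_add_left, h3]
    simpa using hD l hlmem.1 l' hl'mem.1 hll'
end

section
/- Let Δ be an irreducible (possibly non-reduced) root system of rank at least 3 in a Euclidean space, with positive system Δ⁺ and simple roots Π. Then there exists a positive root λ with maximal length, satisfying λ ∈ Π or λ/2 ∈ Π, such that for every positive root μ there exists a positive root ν with ⟨λ + μ, ν⟩ ≤ 0. -/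
open RealInnerProductSpace Finset Classical

set_option linter.unusedSectionVars false
set_option maxHeartbeats 1000000

section
variable {V : Type*} [NormedAddCommGroup V] [InnerProductSpace ℝ V] [FiniteDimensional ℝ V]

private lemma ips {x : V} (hx : x ≠ 0) : 0 < ⟪x,x⟫ := by
  rcases lt_or_ge 0 ⟪x,x⟫ with h | h
  · exact h
  · exact absurd (real_inner_self_nonpos.mp h) hx

private lemma cs_strict {x y : V} (hx : x ≠ 0) (h : ¬ ∃ t : ℝ, y = t • x) :
    ⟪x,y⟫ * ⟪x,y⟫ < ⟪x,x⟫ * ⟪y,y⟫ := by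
  by_contra hcon
  push_neg at hcon
  apply h
  have hxx : 0 < ⟪x,x⟫ := ips hx
  set z := ⟪x,x⟫ • y - ⟪x,y⟫ • x with hz
  have hzi : ⟪z,z⟫ = ⟪x,x⟫ * (⟪x,x⟫*⟪y,y⟫ - ⟪x,y⟫*⟪x,y⟫) := by
    simp only [hz, inner_sub_left, inner_sub_right, real_inner_smul_left,
      real_inner_smul_right, real_inner_comm x y]
    ring
  have hzz : ⟪z,z⟫ ≤ 0 := by rw [hzi]; nlinarith
  have hz0 : z = 0 := real_inner_self_nonpos.mp hzz
  have he : ⟪x,x⟫ • y = ⟪x,y⟫ • x := by rwa [sub_eq_zero] at hz0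
  refine ⟨⟪x,y⟫ / ⟪x,x⟫, ?_⟩
  have := congrArg (fun v => (⟪x,x⟫)⁻¹ • v) he
  simp only [smul_smul, inv_mul_cancel₀ hxx.ne', one_smul] at this
  rw [div_eq_inv_mul]; exact this

private lemma int_pos_ge_one {r : ℝ} (n : ℤ) (hn : r = (n:ℝ)) (hr : 0 < r) : 1 ≤ r := by
  have h1 : 0 < n := by exact_mod_cast hn ▸ hr
  have h2 : (1:ℤ) ≤ n := h1
  rw [hn]; exact_mod_cast h2

end

open RealInnerProductSpace Finset Classical in
/-- For an irreducible (possibly non-reduced) crystallographic root system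
`Δ` of rank ≥ 3 with positive system `Δ⁺` and simple roots `Π`, there is a positive root
`λ` of maximal length, with `λ ∈ Π` or `λ/2 ∈ Π`, such that for every positive root `μ`
there exists a positive root `ν` with `⟨λ + μ, ν⟩ ≤ 0`. -/
theorem stmt2
    {V : Type*} [NormedAddCommGroup V] [InnerProductSpace ℝ V] [FiniteDimensional ℝ V]
    (Δ : Finset V) (h0 : (0 : V) ∉ Δ)
    (hrefl : ∀ α ∈ Δ, ∀ β ∈ Δ, β - (2 * ⟪β, α⟫ / ⟪α, α⟫) • α ∈ Δ)
    (hcrys : ∀ α ∈ Δ, ∀ β ∈ Δ, ∃ n : ℤ, 2 * ⟪β, α⟫ / ⟪α, α⟫ = (n : ℝ))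
    (hirr : ¬ ∃ Δ₁ Δ₂ : Finset V, Δ₁.Nonempty ∧ Δ₂.Nonempty ∧ Δ = Δ₁ ∪ Δ₂ ∧
      Disjoint Δ₁ Δ₂ ∧ ∀ α ∈ Δ₁, ∀ β ∈ Δ₂, ⟪α, β⟫ = 0)
    (hrank : 3 ≤ Module.finrank ℝ (Submodule.span ℝ (Δ : Set V)))
    (f : V →ₗ[ℝ] ℝ) (hf : ∀ α ∈ Δ, f α ≠ 0)
    (Δp : Finset V) (hΔp : Δp = Δ.filter (fun α => 0 < f α))
    (Pi : Finset V)
    (hPi : Pi = Δp.filter (fun α => ¬ ∃ β ∈ Δp, ∃ γ ∈ Δp, α = β + γ)) :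
    ∃ l ∈ Δp, (∀ μ ∈ Δp, ‖μ‖ ≤ ‖l‖) ∧ (l ∈ Pi ∨ (1 / 2 : ℝ) • l ∈ Pi) ∧
      ∀ μ ∈ Δp, ∃ ν ∈ Δp, ⟪l + μ, ν⟫ ≤ 0 := by
  classical
  -- membership lemmas
  have hΔp' : ∀ x, x ∈ Δp ↔ x ∈ Δ ∧ 0 < f x := by
    intro x; rw [hΔp]; simp [Finset.mem_filter]
  have hPi' : ∀ x, x ∈ Pi ↔ x ∈ Δp ∧ ¬ ∃ β ∈ Δp, ∃ γ ∈ Δp, x = β + γ := by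
    intro x; rw [hPi]; simp [Finset.mem_filter]
  have hPiΔp : ∀ x ∈ Pi, x ∈ Δp := fun x hx => ((hPi' x).mp hx).1
  have hΔpΔ : ∀ x ∈ Δp, x ∈ Δ := fun x hx => ((hΔp' x).mp hx).1
  have hfpos : ∀ x ∈ Δp, 0 < f x := fun x hx => ((hΔp' x).mp hx).2
  have hne0 : ∀ x ∈ Δ, x ≠ 0 := fun x hx h => h0 (h ▸ hx)
  have hip : ∀ x ∈ Δ, 0 < ⟪x,x⟫ := fun x hx => ips (hne0 x hx)
  -- negation closure
  have hneg : ∀ x ∈ Δ, -x ∈ Δ := by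
    intro x hx
    have h2 : x - (2 * ⟪x,x⟫ / ⟪x,x⟫) • x ∈ Δ := hrefl x hx x hx
    have hxx : ⟪x,x⟫ ≠ 0 := (hip x hx).ne'
    have hc : 2 * ⟪x,x⟫ / ⟪x,x⟫ = (2:ℝ) := by
      field_simp
    rw [hc] at h2
    have : x - (2:ℝ) • x = -x := by module
    rwa [this] at h2
  have hsplitΔ : ∀ x ∈ Δ, x ∈ Δp ∨ -x ∈ Δp := by
    intro x hx
    rcases lt_or_gt_of_ne (hf x hx) with h | h
    · right; rw [hΔp' (-x)]; refine ⟨hneg x hx, ?_⟩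
      rw [map_neg]; linarith
    · left; exact (hΔp' x).mpr ⟨hx, h⟩
  -- ratio lemma (proportional roots)
  have ratio : ∀ a ∈ Δ, ∀ b ∈ Δ, ∀ t : ℝ, b = t • a →
      t = 1/2 ∨ t = 1 ∨ t = 2 ∨ t = -(1/2) ∨ t = -1 ∨ t = -2 := by
    intro a ha b hb t hba
    have haa : 0 < ⟪a,a⟫ := hip a ha
    have ht0 : t ≠ 0 := by
      rintro rfl
      exact hne0 b hb (by rw [hba, zero_smul])
    obtain ⟨p, hp⟩ := hcrys a ha b hb
    obtain ⟨q, hq⟩ := hcrys b hb a ha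
    have hba' : ⟪b,a⟫ = t * ⟪a,a⟫ := by rw [hba, real_inner_smul_left]
    have hab' : ⟪a,b⟫ = t * ⟪a,a⟫ := by rw [hba, real_inner_smul_right]
    have hbb' : ⟪b,b⟫ = t * t * ⟪a,a⟫ := by
      rw [hba, real_inner_smul_left, real_inner_smul_right]; ring
    have hp' : (p:ℝ) = 2 * t := by
      rw [← hp, hba']; field_simp
    have hq' : (q:ℝ) * t = 2 := by
      have hbb0 : ⟪b,b⟫ ≠ 0 := (hip b hb).ne'
      have h2 : 2 * ⟪a,b⟫ = (q:ℝ) * ⟪b,b⟫ := by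
        rw [← hq, div_mul_cancel₀ _ hbb0]
      rw [hab', hbb'] at h2
      have h3 : ((q:ℝ) * t - 2) * (t * ⟪a,a⟫) = 0 := by linear_combination -h2
      rcases mul_eq_zero.mp h3 with h4 | h4
      · linarith
      · exact absurd h4 (mul_ne_zero ht0 haa.ne')
    have hpq : (p:ℝ) * q = 4 := by
      calc (p:ℝ) * q = (2*t) * q := by rw [hp']
      _ = 2 * ((q:ℝ)*t) := by ring
      _ = 4 := by rw [hq']; norm_num
    have hpqZ : p * q = 4 := by exact_mod_cast hpq
    have hpd : p ∣ 4 := ⟨q, hpqZ.symm⟩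
    have hple : p ≤ 4 := Int.le_of_dvd (by norm_num) hpd
    have hpge : -4 ≤ p := by
      have : -p ∣ 4 := (neg_dvd).mpr hpd
      have := Int.le_of_dvd (by norm_num) this
      omega
    have hpcases : p = -4 ∨ p = -2 ∨ p = -1 ∨ p = 1 ∨ p = 2 ∨ p = 4 := by
      interval_cases p <;> omega
    rcases hpcases with rfl | rfl | rfl | rfl | rfl | rfl <;>
      [ (right;right;right;right;right; push_cast at hp'; linarith);
        (right;right;right;right;left; push_cast at hp'; linarith);
        (right;right;right;left; push_cast at hp'; linarith);
        (left; push_cast at hp'; linarith);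
        (right;left; push_cast at hp'; linarith);
        (right;right;left; push_cast at hp'; linarith) ]
  -- B4: if inner positive and distinct, difference is a root
  have sub_mem : ∀ a ∈ Δ, ∀ b ∈ Δ, 0 < ⟪a,b⟫ → a ≠ b → a - b ∈ Δ := by
    intro a ha b hb hpos hne
    by_cases hprop : ∃ t : ℝ, b = t • a
    · obtain ⟨t, rfl⟩ := hprop
      have haa : 0 < ⟪a,a⟫ := hip a ha
      have htpos : 0 < t := by
        rw [real_inner_smul_right] at hpos
        nlinarith
      rcases ratio a ha _ hb t rfl with h|h|h|h|h|h
      · -- t = 1/2 : a - b = b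
        have : a - t • a = t • a := by rw [h]; module
        rwa [this]
      · exact absurd (by rw [h, one_smul]) (Ne.symm hne)
      · -- t = 2 : a - b = -a
        have : a - t • a = -a := by rw [h]; module
        rw [this]; exact hneg a ha
      all_goals linarith
    · obtain ⟨p, hp⟩ := hcrys b hb a ha
      obtain ⟨q, hq⟩ := hcrys a ha b hb
      have haa : 0 < ⟪a,a⟫ := hip a ha
      have hbb : 0 < ⟪b,b⟫ := hip b hb
      have hba' : ⟪b,a⟫ = ⟪a,b⟫ := real_inner_comm a b
      have hp1 : (1:ℝ) ≤ (p:ℝ) := by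
        rw [← hp]; exact int_pos_ge_one p hp (div_pos (by linarith) hbb)
      have hq1 : (1:ℝ) ≤ (q:ℝ) := by
        rw [← hq]; exact int_pos_ge_one q hq (div_pos (by rw [hba']; linarith) haa)
      have hcs : ⟪a,b⟫ * ⟪a,b⟫ < ⟪a,a⟫ * ⟪b,b⟫ := cs_strict (hne0 a ha) hprop
      have hprod : (p:ℝ) * q < 4 := by
        rw [← hp, ← hq, hba', div_mul_div_comm, div_lt_iff₀ (mul_pos hbb haa)]
        nlinarith
      have hp4 : (p:ℤ) * q ≤ 3 := by
        have : (p:ℝ) * q ≤ 3 := by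
          have h4 : ((p:ℤ) * q : ℤ) < 4 := by exact_mod_cast hprod
          have : ((p:ℤ) * q : ℤ) ≤ 3 := by omega
          exact_mod_cast this
        exact_mod_cast this
      have hpZ : (1:ℤ) ≤ p := by exact_mod_cast hp1
      have hqZ : (1:ℤ) ≤ q := by exact_mod_cast hq1
      have hone : p = 1 ∨ q = 1 := by
        by_contra hc
        push_neg at hc
        have hp2 : 2 ≤ p := by omega
        have hq2 : 2 ≤ q := by omega
        nlinarith
      rcases hone with h1 | h1
      · -- a - (2⟪a,b⟫/⟪b,b⟫) • b ∈ Δ with coefficient 1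
        have := hrefl b hb a ha
        rw [hp, h1] at this
        simpa using this
      · have := hrefl a ha b hb
        rw [hq, h1] at this
        have h2 : b - ((1:ℤ):ℝ) • a = -(a - b) := by push_cast; module
        rw [h2] at this
        have := hneg _ this
        rwa [neg_neg] at this
  -- B8: simple roots are pairwise obtuse
  have obtuse : ∀ a ∈ Pi, ∀ b ∈ Pi, a ≠ b → ⟪a,b⟫ ≤ 0 := by
    intro a ha b hb hne
    by_contra hcon
    push_neg at hcon
    have haΔ : a ∈ Δ := hΔpΔ a (hPiΔp a ha)
    have hbΔ : b ∈ Δ := hΔpΔ b (hPiΔp b hb)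
    have hw : a - b ∈ Δ := sub_mem a haΔ b hbΔ hcon hne
    have hfw : f (a - b) ≠ 0 := hf _ hw
    rw [map_sub] at hfw
    rcases lt_or_gt_of_ne hfw with h | h
    · -- b = a + (b - a) decomposes b
      have hba : b - a ∈ Δ := by
        have := hneg _ hw; rwa [neg_sub] at this
      have hbap : b - a ∈ Δp := by
        rw [hΔp' _]
        exact ⟨hba, by rw [map_sub]; linarith⟩
      exact ((hPi' b).mp hb).2 ⟨a, hPiΔp a ha, b - a, hbap, by module⟩
    · have hwp : a - b ∈ Δp := by
        rw [hΔp' _]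
        exact ⟨hw, by rw [map_sub]; linarith⟩
      exact ((hPi' a).mp ha).2 ⟨b, hPiΔp b hb, a - b, hwp, by module⟩
  -- measure for induction
  set meas : V → ℕ := fun x => (Δp.filter (fun w => f w < f x)).card with hmeas
  have meas_lt : ∀ b ∈ Δp, ∀ x ∈ Δp, f b < f x → meas b < meas x := by
    intro b hb x hx h
    apply Finset.card_lt_card
    rw [Finset.ssubset_iff_of_subset]
    · exact ⟨b, by simp only [Finset.mem_filter]; exact ⟨hb, h⟩,
        by simp only [Finset.mem_filter, not_and]; intro _; exact lt_irrefl _⟩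
    · intro w hw
      simp only [Finset.mem_filter] at hw ⊢
      exact ⟨hw.1, hw.2.trans h⟩
  -- B6 decomposition
  have hdec : ∀ x ∈ Δp, x ∉ Pi → ∃ b ∈ Δp, ∃ c ∈ Δp, x = b + c := by
    intro x hx hnx
    by_contra hcon
    exact hnx ((hPi' x).mpr ⟨hx, hcon⟩)
  -- B7: every positive root is an ℕ-combination of simple roots
  have rep_aux : ∀ N : ℕ, ∀ x ∈ Δp, meas x < N →
      ∃ n : V → ℕ, x = ∑ γ ∈ Pi, (n γ : ℝ) • γ := by
    intro N
    induction N with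
    | zero => intro x _ h; exact absurd h (Nat.not_lt_zero _)
    | succ N ih =>
      intro x hx hm
      by_cases hs : x ∈ Pi
      · refine ⟨fun γ => if γ = x then 1 else 0, ?_⟩
        rw [Finset.sum_eq_single_of_mem x hs]
        · simp
        · intro γ _ hne; simp [hne]
      · obtain ⟨b, hb, c, hc, hsum⟩ := hdec x hx hs
        have hfb : f b < f x := by
          rw [hsum, map_add]; have := hfpos c hc; linarith
        have hfc : f c < f x := by
          rw [hsum, map_add]; have := hfpos b hb; linarith
        obtain ⟨nb, hnb⟩ := ih b hb (by have := meas_lt b hb x hx hfb; omega)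
        obtain ⟨nc, hnc⟩ := ih c hc (by have := meas_lt c hc x hx hfc; omega)
        refine ⟨fun γ => nb γ + nc γ, ?_⟩
        rw [hsum, hnb, hnc, ← Finset.sum_add_distrib]
        apply Finset.sum_congr rfl
        intro γ _
        push_cast
        rw [add_smul]
  have rep : ∀ x ∈ Δp, ∃ n : V → ℕ, x = ∑ γ ∈ Pi, (n γ : ℝ) • γ := by
    intro x hx
    exact rep_aux (meas x + 1) x hx (Nat.lt_succ_self _)
  -- coefficients of 0 are nonpositive (hence zero)
  have zero_coeff_le : ∀ c : V → ℝ, (∑ γ ∈ Pi, c γ • γ) = 0 → ∀ γ ∈ Pi, c γ ≤ 0 := by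
    intro c hsum γ hγ
    by_contra hcon
    push_neg at hcon
    set S := Pi.filter (fun γ => 0 < c γ) with hS
    set T := Pi.filter (fun γ => ¬ 0 < c γ) with hT
    have hST : (∑ γ ∈ S, c γ • γ) + (∑ γ ∈ T, c γ • γ) = 0 := by
      rw [Finset.sum_filter_add_sum_filter_not]; exact hsum
    set u := ∑ γ ∈ S, c γ • γ with hu
    have huT : u = -∑ γ ∈ T, c γ • γ := eq_neg_of_add_eq_zero_left hST
    have hdisj : ∀ a ∈ S, ∀ b ∈ T, a ≠ b := by
      intro a haS b hbT hab
      rw [hS, Finset.mem_filter] at haS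
      rw [hT, Finset.mem_filter] at hbT
      exact hbT.2 (hab ▸ haS.2)
    have huu : ⟪u,u⟫ ≤ 0 := by
      have h1 : ⟪u,u⟫ = -⟪u, ∑ γ ∈ T, c γ • γ⟫ := by
        nth_rewrite 2 [huT]
        rw [inner_neg_right]
      rw [h1, neg_nonpos]
      rw [hu, sum_inner]
      apply Finset.sum_nonneg
      intro a haS
      rw [real_inner_smul_left, inner_sum]
      have haPi : a ∈ Pi := by rw [hS, Finset.mem_filter] at haS; exact haS.1
      have hca : 0 < c a := by rw [hS, Finset.mem_filter] at haS; exact haS.2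
      apply mul_nonneg hca.le
      apply Finset.sum_nonneg
      intro b hbT
      rw [real_inner_smul_right]
      have hbPi : b ∈ Pi := by rw [hT, Finset.mem_filter] at hbT; exact hbT.1
      have hcb : c b ≤ 0 := by
        rw [hT, Finset.mem_filter] at hbT; push_neg at hbT; exact hbT.2
      have := obtuse a haPi b hbPi (hdisj a haS b hbT)
      nlinarith
    have hu0 : u = 0 := real_inner_self_nonpos.mp huu
    have hfu : (0:ℝ) = ∑ γ ∈ S, c γ * f γ := by
      have h2 := congrArg f hu0
      rw [hu, map_sum, map_zero] at h2
      simp only [map_smul, smul_eq_mul] at h2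
      exact h2.symm
    have hγS : γ ∈ S := by rw [hS, Finset.mem_filter]; exact ⟨hγ, hcon⟩
    have : 0 < ∑ γ ∈ S, c γ * f γ := by
      apply Finset.sum_pos
      · intro b hbS
        rw [hS, Finset.mem_filter] at hbS
        exact mul_pos hbS.2 (hfpos b (hPiΔp b hbS.1))
      · exact ⟨γ, hγS⟩
    linarith [hfu]
  have zero_coeff : ∀ c : V → ℝ, (∑ γ ∈ Pi, c γ • γ) = 0 → ∀ γ ∈ Pi, c γ = 0 := by
    intro c hsum γ hγ
    have h1 := zero_coeff_le c hsum γ hγ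
    have h2 := zero_coeff_le (fun x => -(c x)) (by
      simp only [neg_smul, Finset.sum_neg_distrib, hsum, neg_zero]) γ hγ
    simp at h2
    linarith
  -- sign dichotomy: coefficients of a positive root are nonnegative
  have signpos : ∀ w ∈ Δp, ∀ a : V → ℝ, w = ∑ γ ∈ Pi, a γ • γ → ∀ γ ∈ Pi, 0 ≤ a γ := by
    intro w hw a ha γ hγ
    obtain ⟨n, hn⟩ := rep w hw
    have hz : (∑ γ ∈ Pi, (a γ - (n γ : ℝ)) • γ) = 0 := by
      simp only [sub_smul]
      rw [Finset.sum_sub_distrib, ← ha, ← hn, sub_self]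
    have := zero_coeff _ hz γ hγ
    have hge : a γ = (n γ : ℝ) := by linarith
    rw [hge]
    positivity
  -- every root with a representation: in Δp or coefficients nonpositive
  have signdich : ∀ w ∈ Δ, ∀ a : V → ℝ, w = ∑ γ ∈ Pi, a γ • γ → w ∉ Δp →
      ∀ γ ∈ Pi, a γ ≤ 0 := by
    intro w hw a ha hwp γ hγ
    have hnw : -w ∈ Δp := by
      rcases hsplitΔ w hw with h | h
      · exact absurd h hwp
      · exact h
    have : -w = ∑ γ ∈ Pi, (fun x => -(a x)) γ • γ := by
      simp only [neg_smul, Finset.sum_neg_distrib, ← ha]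
    have := signpos (-w) hnw _ this γ hγ
    simp at this
    linarith
  -- |Pi| ≥ 3
  have hspan : Submodule.span ℝ (Δ : Set V) ≤ Submodule.span ℝ (Pi : Set V) := by
    rw [Submodule.span_le]
    intro w hw
    rw [Finset.mem_coe] at hw
    have key : ∀ x ∈ Δp, x ∈ Submodule.span ℝ (Pi : Set V) := by
      intro x hx
      obtain ⟨n, hn⟩ := rep x hx
      rw [hn]
      exact Submodule.sum_mem _ (fun γ hγ =>
        Submodule.smul_mem _ _ (Submodule.subset_span (Finset.mem_coe.mpr hγ)))
    rcases hsplitΔ w hw with h | h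
    · exact key w h
    · have := key (-w) h
      simpa using Submodule.neg_mem _ this
  have hcard : 3 ≤ Pi.card := by
    have h1 := Submodule.finrank_mono hspan
    have h2 : Module.finrank ℝ (Submodule.span ℝ (Pi : Set V)) ≤ Pi.card :=
      finrank_span_finset_le_card Pi
    omega
  -- Claim C: every positive root has the same norm as some root that is simple or twice-simple
  have conj_aux : ∀ N : ℕ, ∀ x ∈ Δp, meas x < N →
      ∃ ρ ∈ Δp, ⟪ρ,ρ⟫ = ⟪x,x⟫ ∧ (ρ ∈ Pi ∨ (1/2 : ℝ) • ρ ∈ Pi) := by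
    intro N
    induction N with
    | zero => intro x _ h; exact absurd h (Nat.not_lt_zero _)
    | succ N ih =>
      intro x hx hm
      by_cases h1 : x ∈ Pi
      · exact ⟨x, hx, rfl, Or.inl h1⟩
      by_cases h2 : (1/2 : ℝ) • x ∈ Pi
      · exact ⟨x, hx, rfl, Or.inr h2⟩
      obtain ⟨n, hn⟩ := rep x hx
      have hxΔ : x ∈ Δ := hΔpΔ x hx
      have hxx : 0 < ⟪x,x⟫ := hip x hxΔ
      -- find α ∈ Pi with ⟪x,α⟫ > 0
      have hex : ∃ α ∈ Pi, 0 < ⟪x,α⟫ := by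
        by_contra hcon
        push_neg at hcon
        have : ⟪x,x⟫ ≤ 0 := by
          nth_rewrite 2 [hn]
          rw [inner_sum]
          apply Finset.sum_nonpos
          intro γ hγ
          rw [real_inner_smul_right]
          have h3 := hcon γ hγ
          have h4 : (0:ℝ) ≤ (n γ : ℝ) := by positivity
          nlinarith
        linarith
      obtain ⟨α, hαPi, hxα⟩ := hex
      have hαΔp : α ∈ Δp := hPiΔp α hαPi
      have hαΔ : α ∈ Δ := hΔpΔ α hαΔp
      by_cases hprop : ∃ t : ℝ, x = t • α
      · obtain ⟨t, ht⟩ := hprop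
        have htpos : 0 < t := by
          have h3 := hfpos x hx
          have h4 := hfpos α hαΔp
          rw [ht, map_smul, smul_eq_mul] at h3
          nlinarith
        rcases ratio α hαΔ x hxΔ t ht with h|h|h|h|h|h
        · -- t = 1/2 : α = x + x decomposes α, contradiction
          exfalso
          have hα2 : α = x + x := by
            rw [ht, h]; module
          exact ((hPi' α).mp hαPi).2 ⟨x, hx, x, hx, hα2⟩
        · exact absurd (by rw [ht, h, one_smul]; exact hαPi) h1
        · exfalso
          apply h2
          have : (1/2 : ℝ) • x = α := by rw [ht, h]; module
          rw [this]; exact hαPi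
        all_goals linarith
      · obtain ⟨q, hq⟩ := hcrys α hαΔ x hxΔ
        have hαα : 0 < ⟪α,α⟫ := hip α hαΔ
        have hq1 : (1:ℝ) ≤ (q:ℝ) := by
          rw [← hq]; exact int_pos_ge_one q hq (div_pos (by linarith) hαα)
        have hrefl1 := hrefl α hαΔ x hxΔ
        rw [hq] at hrefl1
        set x' := x - (q:ℝ) • α with hx'
        -- norm preserved
        have hcomm : ⟪α,x⟫ = ⟪x,α⟫ := by
          first | exact real_inner_comm α x | exact real_inner_comm x α
        have h2q : 2 * ⟪x,α⟫ = (q:ℝ) * ⟪α,α⟫ := (div_eq_iff hαα.ne').mp hq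
        have hnorm : ⟪x',x'⟫ = ⟪x,x⟫ := by
          simp only [hx', inner_sub_left, inner_sub_right, real_inner_smul_left,
            real_inner_smul_right, hcomm]
          linear_combination (-(q:ℝ)) * h2q
        -- x' has a positive coefficient away from α
        have hβex : ∃ β ∈ Pi, β ≠ α ∧ 0 < n β := by
          by_contra hcon
          push_neg at hcon
          apply hprop
          refine ⟨(n α : ℝ), ?_⟩
          rw [hn, Finset.sum_eq_single_of_mem α hαPi (fun γ hγ hγα => by
            have h5 := hcon γ hγ hγα
            have h6 : n γ = 0 := by omega
            simp [h6])]
        obtain ⟨β, hβPi, hβα, hβpos⟩ := hβex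
        -- x' is a positive root
        have hx'rep : x' = ∑ γ ∈ Pi, ((fun γ => (n γ : ℝ) - if γ = α then (q:ℝ) else 0) γ) • γ := by
          simp only [sub_smul, ite_smul, zero_smul]
          rw [Finset.sum_sub_distrib, ← hn, Finset.sum_ite_eq' Pi α (fun γ => (q:ℝ) • γ),
            if_pos hαPi]
        have hx'Δ : x' ∈ Δ := hrefl1
        have hx'Δp : x' ∈ Δp := by
          by_contra hcon
          have h5 := signdich x' hx'Δ _ hx'rep hcon β hβPi
          simp only [if_neg hβα, sub_zero] at h5
          have h6 : (0:ℝ) < (n β : ℝ) := by exact_mod_cast hβpos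
          linarith
        have hfx' : f x' < f x := by
          rw [hx', map_sub, map_smul, smul_eq_mul]
          have h5 := hfpos α hαΔp
          nlinarith
        obtain ⟨ρ, hρ1, hρ2, hρ3⟩ := ih x' hx'Δp (by
          have := meas_lt x' hx'Δp x hx hfx'
          omega)
        exact ⟨ρ, hρ1, by rw [hρ2, hnorm], hρ3⟩
  have conj : ∀ x ∈ Δp, ∃ ρ ∈ Δp, ⟪ρ,ρ⟫ = ⟪x,x⟫ ∧ (ρ ∈ Pi ∨ (1/2 : ℝ) • ρ ∈ Pi) :=
    fun x hx => conj_aux (meas x + 1) x hx (Nat.lt_succ_self _)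
  -- connectivity: a simple root is non-orthogonal to some other simple root
  have conn : ∀ δ ∈ Pi, ∃ γ ∈ Pi, γ ≠ δ ∧ ⟪δ,γ⟫ ≠ 0 := by
    intro δ hδPi
    by_contra hcon
    push_neg at hcon
    -- every root non-orthogonal to δ is proportional to δ
    have key : ∀ w ∈ Δp, ⟪δ,w⟫ ≠ 0 → ∃ t : ℝ, w = t • δ := by
      intro w hw hwδ
      obtain ⟨n, hn⟩ := rep w hw
      by_cases hprop : ∃ t : ℝ, w = t • δ
      · exact hprop
      exfalso
      have hδΔp := hPiΔp δ hδPi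
      have hδΔ := hΔpΔ δ hδΔp
      have hwΔ := hΔpΔ w hw
      have hδδ : 0 < ⟪δ,δ⟫ := hip δ hδΔ
      have hinn : ⟪δ,w⟫ = (n δ : ℝ) * ⟪δ,δ⟫ := by
        rw [hn, inner_sum, Finset.sum_eq_single_of_mem δ hδPi (fun γ hγ hγδ => by
          rw [real_inner_smul_right, hcon γ hγ hγδ, mul_zero])]
        rw [real_inner_smul_right]
      have hnδ : 1 ≤ n δ := by
        rcases Nat.eq_zero_or_pos (n δ) with h | h
        · rw [h] at hinn; simp at hinn; exact absurd hinn hwδ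
        · exact h
      have hβex : ∃ β ∈ Pi, β ≠ δ ∧ 0 < n β := by
        by_contra hc2
        push_neg at hc2
        apply hprop
        refine ⟨(n δ : ℝ), ?_⟩
        rw [hn, Finset.sum_eq_single_of_mem δ hδPi (fun γ hγ hγδ => by
          have h5 := hc2 γ hγ hγδ
          have h6 : n γ = 0 := by omega
          simp [h6])]
      obtain ⟨β, hβPi, hβδ, hβpos⟩ := hβex
      -- integrality
      obtain ⟨p, hp⟩ := hcrys δ hδΔ w hwΔ
      obtain ⟨r, hr⟩ := hcrys w hwΔ δ hδΔ
      have hcommδw : ⟪w,δ⟫ = ⟪δ,w⟫ := by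
        first | exact real_inner_comm δ w | exact real_inner_comm w δ
      have hip2 : 0 < ⟪δ,w⟫ := by
        rw [hinn]
        have : (0:ℝ) < (n δ : ℝ) := by exact_mod_cast hnδ
        positivity
      have hww : 0 < ⟪w,w⟫ := hip w hwΔ
      have hp' : (p:ℝ) = 2 * (n δ : ℝ) := by
        rw [← hp, hcommδw, hinn]
        field_simp
      have hr1 : (1:ℝ) ≤ (r:ℝ) := by
        rw [← hr]; exact int_pos_ge_one r hr (div_pos (by linarith) hww)
      have hcs : ⟪δ,w⟫ * ⟪δ,w⟫ < ⟪δ,δ⟫ * ⟪w,w⟫ := cs_strict (hne0 δ hδΔ) hprop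
      have hprod : (p:ℝ) * r < 4 := by
        rw [← hp, ← hr, hcommδw]
        rw [div_mul_div_comm, div_lt_iff₀ (mul_pos hδδ hww)]
        nlinarith
      have hpZ : (2:ℤ) ≤ p := by
        have : (2:ℝ) ≤ (p:ℝ) := by
          rw [hp']
          have : (1:ℝ) ≤ (n δ : ℝ) := by exact_mod_cast hnδ
          linarith
        exact_mod_cast this
      have hrZ : (1:ℤ) ≤ r := by exact_mod_cast hr1
      have hprodZ : p * r < 4 := by exact_mod_cast hprod
      have hp2 : p = 2 ∧ n δ = 1 := by
        have hmul : p * 1 ≤ p * r := mul_le_mul_of_nonneg_left hrZ (by linarith)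
        have hple : p ≤ 3 := by linarith
        have hpeq : p = 2 * (n δ : ℤ) := by exact_mod_cast hp'
        omega
      -- reflection w - 2δ
      have hrefl2 := hrefl δ hδΔ w hwΔ
      rw [hp, hp2.1] at hrefl2
      have hcast : ((2:ℤ):ℝ) = (2:ℝ) := by norm_num
      rw [hcast] at hrefl2
      set w' := w - (2:ℝ) • δ with hw'
      have hw'rep : w' = ∑ γ ∈ Pi, ((fun γ => (n γ : ℝ) - if γ = δ then (2:ℝ) else 0) γ) • γ := by
        simp only [sub_smul, ite_smul, zero_smul]
        rw [Finset.sum_sub_distrib, ← hn, Finset.sum_ite_eq' Pi δ (fun γ => (2:ℝ) • γ),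
          if_pos hδPi]
      by_cases hw'p : w' ∈ Δp
      · have h5 := signpos w' hw'p _ hw'rep δ hδPi
        simp only [if_pos rfl] at h5
        rw [hp2.2] at h5
        norm_num at h5
      · have h5 := signdich w' hrefl2 _ hw'rep hw'p β hβPi
        simp only [if_neg hβδ, sub_zero] at h5
        have h6 : (0:ℝ) < (n β : ℝ) := by exact_mod_cast hβpos
        linarith
    -- build the splitting, contradicting irreducibility
    apply hirr
    refine ⟨Δ.filter (fun w => ⟪δ,w⟫ ≠ 0), Δ.filter (fun w => ¬ ⟪δ,w⟫ ≠ 0), ?_, ?_, ?_, ?_, ?_⟩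
    · refine ⟨δ, ?_⟩
      rw [Finset.mem_filter]
      exact ⟨hΔpΔ δ (hPiΔp δ hδPi), (hip δ (hΔpΔ δ (hPiΔp δ hδPi))).ne'⟩
    · have : ∃ γ ∈ Pi, γ ≠ δ := by
        have h5 : 0 < (Pi.erase δ).card := by
          have := Finset.pred_card_le_card_erase (a := δ) (s := Pi)
          omega
        obtain ⟨γ, hγ⟩ := Finset.card_pos.mp h5
        rw [Finset.mem_erase] at hγ
        exact ⟨γ, hγ.2, hγ.1⟩
      obtain ⟨γ, hγPi, hγδ⟩ := this
      refine ⟨γ, ?_⟩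
      rw [Finset.mem_filter]
      push_neg
      exact ⟨hΔpΔ γ (hPiΔp γ hγPi), hcon γ hγPi hγδ⟩
    · rw [Finset.filter_union_filter_not_eq]
    · exact Finset.disjoint_filter_filter_not Δ Δ _
    · intro a ha b hb
      rw [Finset.mem_filter] at ha hb
      push_neg at hb
      have haΔ := ha.1
      have key2 : ∃ t : ℝ, a = t • δ := by
        rcases hsplitΔ a haΔ with h | h
        · exact key a h ha.2
        · obtain ⟨t, ht⟩ := key (-a) h (by
            rw [inner_neg_right]
            simpa using ha.2)
          exact ⟨-t, by rw [← neg_neg a, ht]; module⟩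
      obtain ⟨t, rfl⟩ := key2
      rw [real_inner_smul_left, hb.2, mul_zero]
  -- the main contradiction argument
  have endgame : ∀ l ∈ Δp, (∀ y ∈ Δp, ⟪y,y⟫ ≤ ⟪l,l⟫) → ∀ δ ∈ Pi, ∀ kR : ℝ,
      (kR = 1 ∨ kR = 2) → l = kR • δ → ∀ μ ∈ Δp, (∀ ν ∈ Δp, 0 < ⟪l + μ, ν⟫) → False := by
    intro l hl hmax δ hδPi kR hkR hlδ μ hμ hdom
    have hδΔp := hPiΔp δ hδPi
    have hδΔ := hΔpΔ δ hδΔp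
    have hμΔ := hΔpΔ μ hμ
    have hlΔ := hΔpΔ l hl
    have hδδ : 0 < ⟪δ,δ⟫ := hip δ hδΔ
    have hμμ : 0 < ⟪μ,μ⟫ := hip μ hμΔ
    have hk1 : (1:ℝ) ≤ kR := by rcases hkR with rfl | rfl <;> norm_num
    have hk2 : kR ≤ 2 := by rcases hkR with rfl | rfl <;> norm_num
    obtain ⟨kZ, hkZ, hkZ12⟩ : ∃ kZ : ℤ, (kZ:ℝ) = kR ∧ (kZ = 1 ∨ kZ = 2) := by
      rcases hkR with rfl | rfl
      · exact ⟨1, by norm_num, Or.inl rfl⟩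
      · exact ⟨2, by norm_num, Or.inr rfl⟩
    obtain ⟨γ₀, hγPi, hγδ, hγne⟩ := conn δ hδPi
    have hγΔp := hPiΔp γ₀ hγPi
    have hγΔ := hΔpΔ γ₀ hγΔp
    have hγγ : 0 < ⟪γ₀,γ₀⟫ := hip γ₀ hγΔ
    have hδγ : ⟪δ,γ₀⟫ < 0 := lt_of_le_of_ne (obtuse δ hδPi γ₀ hγPi (Ne.symm hγδ)) hγne
    -- a third simple root β
    obtain ⟨β, hβPi, hβδ, hβγ⟩ : ∃ β ∈ Pi, β ≠ δ ∧ β ≠ γ₀ := by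
      have h5 : 0 < ((Pi.erase δ).erase γ₀).card := by
        have h6 := Finset.pred_card_le_card_erase (a := γ₀) (s := Pi.erase δ)
        have h7 := Finset.pred_card_le_card_erase (a := δ) (s := Pi)
        omega
      obtain ⟨β, hβ⟩ := Finset.card_pos.mp h5
      rw [Finset.mem_erase, Finset.mem_erase] at hβ
      exact ⟨β, hβ.2.2, hβ.2.1, hβ.1⟩
    have hβΔp := hPiΔp β hβPi
    have hμβ : 0 < ⟪μ,β⟫ := by
      have h5 := hdom β hβΔp
      rw [inner_add_left, hlδ, real_inner_smul_left] at h5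
      have h6 : ⟪δ,β⟫ ≤ 0 := obtuse δ hδPi β hβPi (Ne.symm hβδ)
      nlinarith
    have hindep : ¬ ∃ t : ℝ, μ = t • γ₀ := by
      rintro ⟨t, rfl⟩
      have hfγ := hfpos γ₀ hγΔp
      have hfμ := hfpos _ hμ
      rw [map_smul, smul_eq_mul] at hfμ
      have htpos : 0 < t := by nlinarith
      have h6 : ⟪γ₀,β⟫ ≤ 0 := obtuse γ₀ hγPi β hβPi (Ne.symm hβγ)
      rw [real_inner_smul_left] at hμβ
      nlinarith
    -- crystallographic integers
    obtain ⟨cI, hcI⟩ := hcrys γ₀ hγΔ δ hδΔ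
    obtain ⟨eI, heI⟩ := hcrys γ₀ hγΔ μ hμΔ
    obtain ⟨dI, hdI⟩ := hcrys μ hμΔ γ₀ hγΔ
    have hcommμγ : ⟪γ₀,μ⟫ = ⟪μ,γ₀⟫ := by
      first | exact real_inner_comm γ₀ μ | exact real_inner_comm μ γ₀
    have hcommδγ : ⟪γ₀,δ⟫ = ⟪δ,γ₀⟫ := by
      first | exact real_inner_comm γ₀ δ | exact real_inner_comm δ γ₀
    have hcIneg : cI ≤ -1 := by
      have h5 : ((cI:ℤ):ℝ) < 0 := by
        rw [← hcI]
        exact div_neg_of_neg_of_pos (by linarith) hγγ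
      have : cI < 0 := by exact_mod_cast h5
      omega
    -- relation forms
    have hcrel : 2*⟪δ,γ₀⟫ = (cI:ℝ) * ⟪γ₀,γ₀⟫ := (div_eq_iff hγγ.ne').mp hcI
    have herel : 2*⟪μ,γ₀⟫ = (eI:ℝ) * ⟪γ₀,γ₀⟫ := (div_eq_iff hγγ.ne').mp heI
    have hdrel : 2*⟪γ₀,μ⟫ = (dI:ℝ) * ⟪μ,μ⟫ := (div_eq_iff hμμ.ne').mp hdI
    -- dominance at γ₀ in integer units
    have hdomγ := hdom γ₀ hγΔp
    rw [hlδ, inner_add_left, real_inner_smul_left] at hdomγ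
    have hint1 : 1 ≤ eI + kZ * cI := by
      have h5 : (0:ℝ) < ((eI + kZ*cI : ℤ):ℝ) := by
        push_cast
        rw [hkZ]
        nlinarith [hcrel, herel, hdomγ, hγγ]
      have : 0 < eI + kZ*cI := by exact_mod_cast h5
      omega
    have hkZ1 : 1 ≤ kZ := by rcases hkZ12 with rfl | rfl <;> omega
    have hkc : kZ * cI ≤ -kZ := by
      have h5 := mul_le_mul_of_nonneg_left hcIneg (show (0:ℤ) ≤ kZ by omega)
      linarith
    have heIge : 2 ≤ eI := by linarith
    have hμγ : 0 < ⟪μ,γ₀⟫ := by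
      by_contra h7
      push_neg at h7
      have h8 : (eI:ℝ) * ⟪γ₀,γ₀⟫ ≤ 0 := by rw [← herel]; linarith
      have h9 : (2:ℝ) ≤ (eI:ℝ) := by exact_mod_cast heIge
      nlinarith
    have hdI1 : 1 ≤ dI := by
      have h5 : (1:ℝ) ≤ (dI:ℝ) := by
        rw [← hdI]
        exact int_pos_ge_one dI hdI (div_pos (by rw [hcommμγ]; linarith) hμμ)
      exact_mod_cast h5
    have hcs := cs_strict (hne0 γ₀ hγΔ) hindep
    have hprod : (dI:ℝ) * eI < 4 := by
      rw [← hdI, ← heI, ← hcommμγ, div_mul_div_comm, div_lt_iff₀ (mul_pos hμμ hγγ)]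
      nlinarith
    have hprodZ : dI * eI ≤ 3 := by
      have h5 : ((dI * eI : ℤ):ℝ) < 4 := by push_cast; exact hprod
      have : dI * eI < 4 := by exact_mod_cast h5
      omega
    have hdIeq : dI = 1 := by
      by_contra h5
      have h6 : 2 ≤ dI := by omega
      nlinarith
    have heIle : eI ≤ 3 := by nlinarith
    -- norm relations: ⟪μ,μ⟫ = eI * ⟪γ₀,γ₀⟫
    have hmrel : ⟪μ,μ⟫ = (eI:ℝ) * ⟪γ₀,γ₀⟫ := by
      rw [hdIeq] at hdrel
      push_cast at hdrel
      rw [hcommμγ] at hdrel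
      linarith [herel]
    rcases hkR with rfl | rfl
    · -- k = 1 : l = δ
      have hkZe : kZ = 1 := by exact_mod_cast hkZ
      obtain ⟨CI, hCI⟩ := hcrys δ hδΔ γ₀ hγΔ
      have hCneg : CI ≤ -1 := by
        have h5 : ((CI:ℤ):ℝ) < 0 := by
          rw [← hCI]
          exact div_neg_of_neg_of_pos (by rw [hcommδγ]; linarith) hδδ
        have : CI < 0 := by exact_mod_cast h5
        omega
      have hCrel : 2*⟪γ₀,δ⟫ = (CI:ℝ) * ⟪δ,δ⟫ := (div_eq_iff hδδ.ne').mp hCI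
      have hmaxμ : ⟪μ,μ⟫ ≤ ⟪δ,δ⟫ := by
        have h5 := hmax μ hμ
        rw [hlδ, one_smul] at h5
        exact h5
      -- chain: (-cI)*mγ = (-CI)*mδ ≥ mδ ≥ m = eI*mγ
      have hCleR : ((CI:ℤ):ℝ) ≤ -1 := by exact_mod_cast hCneg
      have hcc : (cI:ℝ) * ⟪γ₀,γ₀⟫ = (CI:ℝ) * ⟪δ,δ⟫ := by
        rw [hcommδγ] at hCrel
        linarith [hcrel, hCrel]
      have h8 : (eI:ℝ) * ⟪γ₀,γ₀⟫ ≤ (-(cI:ℝ)) * ⟪γ₀,γ₀⟫ := by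
        nlinarith [hcc, hmaxμ, hmrel, hδδ, mul_nonneg (show (0:ℝ) ≤ -(CI:ℝ) - 1 by linarith) hδδ.le]
      have h9 : (eI:ℝ) ≤ -(cI:ℝ) := le_of_mul_le_mul_right h8 hγγ
      have h10 : eI ≤ -cI := by exact_mod_cast h9
      rw [hkZe] at hint1
      have hint1' : 1 ≤ eI + cI := by linarith [hint1]
      omega
    · -- k = 2 : l = 2δ
      have hkZe : kZ = 2 := by exact_mod_cast hkZ
      rw [hkZe] at hint1
      have hcIe : cI = -1 ∧ eI = 3 := by constructor <;> omega
      obtain ⟨LI, hLI⟩ := hcrys l hlΔ γ₀ hγΔ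
      have hll : ⟪l,l⟫ = 4 * ⟪δ,δ⟫ := by
        rw [hlδ, real_inner_smul_left, real_inner_smul_right]; ring
      have hγl : ⟪γ₀,l⟫ = 2 * ⟪γ₀,δ⟫ := by
        rw [hlδ, real_inner_smul_right]
      have hllpos : 0 < ⟪l,l⟫ := hip l hlΔ
      have hLrel : 2*⟪γ₀,l⟫ = (LI:ℝ) * ⟪l,l⟫ := (div_eq_iff hllpos.ne').mp hLI
      have hLneg : LI ≤ -1 := by
        have h5 : ((LI:ℤ):ℝ) < 0 := by
          have h6 : 2*⟪γ₀,l⟫ < 0 := by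
            rw [hγl, hcommδγ]; linarith
          nlinarith [hLrel, hll, hδδ]
        have : LI < 0 := by exact_mod_cast h5
        omega
      -- ⟪γ₀,δ⟫ = -mγ/2 ; LI ≤ -1 gives 4⟪γ₀,δ⟫ ≤ -4mδ i.e. mγ ≥ 2mδ
      have hγδval : 2*⟪γ₀,δ⟫ = -⟪γ₀,γ₀⟫ := by
        rw [hcommδγ]
        rw [hcIe.1] at hcrel
        push_cast at hcrel
        linarith
      have hLle : ((LI:ℤ):ℝ) ≤ -1 := by exact_mod_cast hLneg
      have hmγ2mδ : 2*⟪δ,δ⟫ ≤ ⟪γ₀,γ₀⟫ := by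
        nlinarith [hLrel, hll, hγl, hγδval, hδδ,
          mul_nonneg (show (0:ℝ) ≤ -(LI:ℝ) - 1 by linarith [hLle]) hδδ.le]
      have hmaxμ : ⟪μ,μ⟫ ≤ 4*⟪δ,δ⟫ := by
        have h5 := hmax μ hμ
        rw [hll] at h5
        exact h5
      rw [hcIe.2] at hmrel
      push_cast at hmrel
      nlinarith
  -- final assembly
  have hΔne : Δ.Nonempty := by
    by_contra h
    rw [Finset.not_nonempty_iff_eq_empty] at h
    rw [h, Finset.coe_empty, Submodule.span_empty] at hrank
    rw [finrank_bot] at hrank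
    omega
  obtain ⟨a0, ha0⟩ := hΔne
  have hΔpne : Δp.Nonempty := by
    rcases hsplitΔ a0 ha0 with h | h
    exacts [⟨_, h⟩, ⟨_, h⟩]
  obtain ⟨lm, hlm, hlmmax⟩ := Δp.exists_max_image (fun w => ‖w‖) hΔpne
  obtain ⟨l, hlΔp, hlnorm, hlPi⟩ := conj lm hlm
  have hlnorm' : ‖l‖ = ‖lm‖ := by
    rw [real_inner_self_eq_norm_mul_norm, real_inner_self_eq_norm_mul_norm] at hlnorm
    nlinarith [norm_nonneg l, norm_nonneg lm]
  refine ⟨l, hlΔp, ?_, hlPi, ?_⟩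
  · intro y hy
    have h1 := hlmmax y hy
    rw [hlnorm']
    exact h1
  · intro μ hμ
    by_contra hcon
    push_neg at hcon
    have hmax2 : ∀ y ∈ Δp, ⟪y,y⟫ ≤ ⟪l,l⟫ := by
      intro y hy
      rw [real_inner_self_eq_norm_mul_norm, real_inner_self_eq_norm_mul_norm]
      have h1 := hlmmax y hy
      rw [← hlnorm'] at h1
      nlinarith [norm_nonneg y]
    rcases hlPi with h | h
    · exact endgame l hlΔp hmax2 l h 1 (Or.inl rfl) (by rw [one_smul]) μ hμ hcon
    · exact endgame l hlΔp hmax2 _ h 2 (Or.inr rfl) (by rw [smul_smul]; norm_num) μ hμ hcon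
end

section
/- With the shape operators 𝒮_ξ H = 0 (H ∈ 𝔟) and 𝒮_ξ X_λ = λ(ξ)X_λ (X_λ ∈ 𝔤_λ, λ ∈ Δ⁺), the mean curvature vector ℋ of S·o (determined by ⟨ℋ, ξ⟩ = tr 𝒮_ξ for all ξ ∈ 𝔟^⊥) equals the orthogonal projection of 2H_δ onto 𝔟^⊥, where H_δ = (1/2)∑_{λ∈Δ⁺} (dim 𝔤_λ) H_λ. In particular, S·o is minimal (ℋ = 0) if and only if H_δ ∈ 𝔟. -/
open RealInnerProductSpace Finset in
/-- With shape operators `𝒮_ξ H = 0` (`H ∈ 𝔟`) and `𝒮_ξ X_λ = λ(ξ) X_λ`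
(`X_λ ∈ 𝔤_λ`), so that `tr 𝒮_ξ = ∑_{λ∈Δ⁺} dim 𝔤_λ · λ(ξ)`, the mean curvature vector `ℋ`
of `S·o` — the vector of `𝔟^⊥` determined by `⟨ℋ, ξ⟩ = tr 𝒮_ξ` for all `ξ ∈ 𝔟^⊥` — equals
the orthogonal projection of `2 H_δ` onto `𝔟^⊥`, where
`H_δ = (1/2) ∑_{λ∈Δ⁺} (dim 𝔤_λ) H_λ`. In particular `S·o` is minimal (`ℋ = 0`) iff
`H_δ ∈ 𝔟`. -/
theorem stmt14
    {V : Type*} [NormedAddCommGroup V] [InnerProductSpace ℝ V] [FiniteDimensional ℝ V]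
    (b : Submodule ℝ V)
    (Δp : Finset (V →ₗ[ℝ] ℝ)) (m : (V →ₗ[ℝ] ℝ) → ℕ) (hm : ∀ l ∈ Δp, 0 < m l)
    (Hv : (V →ₗ[ℝ] ℝ) → V) (hHv : ∀ (l : V →ₗ[ℝ] ℝ) (x : V), ⟪Hv l, x⟫ = l x)
    (Hδ : V) (hHδ : Hδ = (1 / 2 : ℝ) • ∑ l ∈ Δp, (m l : ℝ) • Hv l)
    (ℋ : V) (hℋmem : ℋ ∈ bᗮ)
    (hℋ : ∀ ξ ∈ bᗮ, ⟪ℋ, ξ⟫ = ∑ l ∈ Δp, (m l : ℝ) * l ξ) :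
    ℋ = (↑(Submodule.orthogonalProjectionOnto bᗮ ((2 : ℝ) • Hδ)) : V) ∧ (ℋ = 0 ↔ Hδ ∈ b) := by
  have key : ∀ ξ ∈ bᗮ, ⟪ℋ, ξ⟫ = ⟪(2 : ℝ) • Hδ, ξ⟫ := by
    intro ξ hξ
    rw [hℋ ξ hξ, hHδ, smul_smul]
    norm_num
    rw [sum_inner]
    exact Finset.sum_congr rfl fun l _ => by
      rw [real_inner_smul_left, hHv]
  have hproj : ℋ = (↑(Submodule.orthogonalProjectionOnto bᗮ ((2 : ℝ) • Hδ)) : V) := by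
    symm
    rw [Submodule.coe_orthogonalProjectionOnto_apply]
    apply Submodule.eq_starProjection_of_mem_of_inner_eq_zero hℋmem
    intro ξ hξ
    rw [inner_sub_left, key ξ hξ]
    ring
  refine ⟨hproj, ?_⟩
  constructor
  · intro h0
    have : Hδ ∈ bᗮᗮ := by
      intro ξ hξ
      have := key ξ hξ
      rw [h0, inner_zero_left, real_inner_smul_left] at this
      have : ⟪Hδ, ξ⟫ = 0 := by linarith
      rwa [real_inner_comm] at this
    rwa [Submodule.orthogonal_orthogonal] at this
  · intro hb
    have h2 : (2 : ℝ) • Hδ ∈ b := b.smul_mem _ hb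
    have : ∀ ξ ∈ bᗮ, ⟪ℋ, ξ⟫ = 0 := fun ξ hξ => by
      rw [key ξ hξ]; exact hξ _ h2
    have := this ℋ hℋmem
    exact inner_self_eq_zero.mp this
end

section
/- Let Δ⁺ be a set of positive roots with root space dimensions m_λ = dim 𝔤_λ, and let 𝔟 ⊂ 𝔞 be a subspace with H_δ ∈ 𝔟 (where H_δ = (1/2)∑ m_λ H_λ). Suppose there exists λ₀ ∈ Δ⁺ such that H_{λ₀+μ} ∉ 𝔟 for every μ ∈ Δ⁺. Then there is NO permutation σ of the multiset {λ₁,…,λ_ℓ} (each root repeated m_λ times) satisfying (λ_i + σ(λ_i))|_{𝔟^⊥} = 0 for all i; i.e., the multiset of restricted roots to 𝔟^⊥ is not invariant under negation. -/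
open Finset Classical in
/-- Let `Δ⁺` be positive roots (identified with vectors `H_λ` of a Euclidean
space `𝔞`) with multiplicities `m_λ = dim 𝔤_λ`, enumerated as `λ₁, …, λ_ℓ` with each root
repeated according to its multiplicity, and let `𝔟 ⊆ 𝔞` with `H_δ ∈ 𝔟`. If some `λ₀ ∈ Δ⁺`
satisfies `H_{λ₀+μ} ∉ 𝔟` for every `μ ∈ Δ⁺` (note `(λ+μ)|_{𝔟^⊥} = 0 ↔ H_{λ+μ} ∈ 𝔟`),
then there is no permutation `σ` of `λ₁, …, λ_ℓ` with `(λ_i + σ(λ_i))|_{𝔟^⊥} = 0` for all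
`i`; i.e. the multiset of restricted roots on `𝔟^⊥` is not invariant under negation. -/
theorem stmt15
    {V : Type*} [NormedAddCommGroup V] [InnerProductSpace ℝ V] [FiniteDimensional ℝ V]
    (Δp : Finset V) (m : V → ℕ) (hm : ∀ l ∈ Δp, 0 < m l)
    (b : Submodule ℝ V)
    (Hδ : V) (hHδ : Hδ = (1 / 2 : ℝ) • ∑ l ∈ Δp, (m l : ℝ) • l) (hHδb : Hδ ∈ b)
    (l₀ : V) (hl₀ : l₀ ∈ Δp) (hnon : ∀ μ ∈ Δp, l₀ + μ ∉ b)
    (ℓ : ℕ) (r : Fin ℓ → V) (hr : ∀ i, r i ∈ Δp)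
    (hcount : ∀ l ∈ Δp, (univ.filter (fun i => r i = l)).card = m l) :
    ¬ ∃ σ : Equiv.Perm (Fin ℓ), ∀ i, r i + r (σ i) ∈ b := by
  rintro ⟨σ, hσ⟩
  have hpos : 0 < (univ.filter (fun i => r i = l₀)).card := by
    rw [hcount l₀ hl₀]; exact hm l₀ hl₀
  obtain ⟨i, hi⟩ := Finset.card_pos.mp hpos
  have hri : r i = l₀ := (Finset.mem_filter.mp hi).2
  exact hnon (r (σ i)) (hr _) (hri ▸ hσ i)
end

section
/- Let P be a connected submanifold of ℝ^d and suppose that for every p ∈ P the translated submanifold P − p (translating p to the origin) has the same normal space at the origin as P does at its base point 0 ∈ P. Then P is an open subset of an affine subspace of ℝ^d. -/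
set_option maxHeartbeats 1000000

open Topology Filter in
open scoped Manifold in
/-- Let `P ⊆ ℝ^d` be a connected embedded smooth submanifold with `0 ∈ P`
(realized as the image of a smooth embedding `f : M → ℝ^d` of injective differential from
a connected `m`-manifold, with `f x₀ = 0`). If for every `p ∈ P` the translate `P − p`
has the same normal space at the origin as `P` does at `0` — equivalently, all tangent
spaces `range (df_x)` coincide with `T := range (df_{x₀})` — then `P` is an open subset
of an affine subspace of `ℝ^d` (namely of the linear subspace `T` through `0`). -/
theorem stmt18
    {d m : ℕ} {M : Type*} [TopologicalSpace M]
    [ChartedSpace (EuclideanSpace ℝ (Fin m)) M]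
    [IsManifold (𝓡 m) (⊤ : ℕ∞) M] [ConnectedSpace M]
    (f : M → EuclideanSpace ℝ (Fin d))
    (hf : ContMDiff (𝓡 m) 𝓘(ℝ, EuclideanSpace ℝ (Fin d)) (⊤ : ℕ∞) f)
    (hemb : Topology.IsEmbedding f)
    (himm : ∀ x : M, Function.Injective (mfderiv (𝓡 m) 𝓘(ℝ, EuclideanSpace ℝ (Fin d)) f x))
    (x₀ : M) (hx₀ : f x₀ = 0)
    (hnormal : ∀ x : M,
      LinearMap.range (mfderiv (𝓡 m) 𝓘(ℝ, EuclideanSpace ℝ (Fin d)) f x).toLinearMap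
        = LinearMap.range (mfderiv (𝓡 m) 𝓘(ℝ, EuclideanSpace ℝ (Fin d)) f x₀).toLinearMap) :
    Set.range f ⊆
      (LinearMap.range (mfderiv (𝓡 m) 𝓘(ℝ, EuclideanSpace ℝ (Fin d)) f x₀).toLinearMap :
        Submodule ℝ (EuclideanSpace ℝ (Fin d))) ∧
    IsOpen (Subtype.val ⁻¹' Set.range f :
      Set (LinearMap.range (mfderiv (𝓡 m) 𝓘(ℝ, EuclideanSpace ℝ (Fin d)) f x₀).toLinearMap)) := by
  classical
  set T : Submodule ℝ (EuclideanSpace ℝ (Fin d)) :=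
    LinearMap.range (mfderiv (𝓡 m) 𝓘(ℝ, EuclideanSpace ℝ (Fin d)) f x₀).toLinearMap with hT
  have hfd : ∀ x, MDifferentiableAt (𝓡 m) 𝓘(ℝ, EuclideanSpace ℝ (Fin d)) f x :=
    fun x => (hf x).mdifferentiableAt (by simp)
  have hrange : ∀ x, LinearMap.range (mfderiv (𝓡 m) 𝓘(ℝ, EuclideanSpace ℝ (Fin d)) f x).toLinearMap = T :=
    hnormal
  set π : EuclideanSpace ℝ (Fin d) →L[ℝ] ↥Tᗮ := Tᗮ.orthogonalProjectionOnto with hπ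
  -- composition with derivative is zero
  have hπD : ∀ x, π.comp (mfderiv (𝓡 m) 𝓘(ℝ, EuclideanSpace ℝ (Fin d)) f x) = 0 := by
    intro x
    refine ContinuousLinearMap.ext fun v => ?_
    have hv : mfderiv (𝓡 m) 𝓘(ℝ, EuclideanSpace ℝ (Fin d)) f x v ∈ T := by
      rw [← hrange x]; exact LinearMap.mem_range_self _ v
    have := Submodule.orthogonalProjectionOnto_apply_of_mem_orthogonal
      (K := Tᗮ) (T.le_orthogonal_orthogonal hv)
    exact this
  have hh : ∀ x, HasMFDerivAt (𝓡 m) 𝓘(ℝ, ↥Tᗮ) (fun y => π (f y)) x 0 := by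
    intro x
    have h1 := (π.hasMFDerivAt (x := f x)).comp x (hfd x).hasMFDerivAt
    exact h1.congr_mfderiv (hπD x)
  -- local constancy of π ∘ f
  have hloc : ∀ x : M, ∀ᶠ y in 𝓝 x, π (f y) = π (f x) := by
    intro x
    set e := extChartAt (𝓡 m) x with he
    have hopen : IsOpen e.target := isOpen_extChartAt_target x
    have ha : e x ∈ e.target := (extChartAt (𝓡 m) x).map_source (mem_extChartAt_source x)
    obtain ⟨ε, hε, hball⟩ := Metric.isOpen_iff.1 hopen _ ha
    have hder : ∀ p ∈ Metric.ball (e x) ε,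
        HasFDerivAt (fun q => π (f (e.symm q))) (0 : EuclideanSpace ℝ (Fin m) →L[ℝ] ↥Tᗮ) p := by
      intro p hp
      have hpt : p ∈ e.target := hball hp
      have h1 : MDifferentiableAt 𝓘(ℝ, EuclideanSpace ℝ (Fin m)) (𝓡 m) e.symm p := by
        have := mdifferentiableWithinAt_extChartAt_symm (I := 𝓡 m) (x := x) hpt
        simpa [mdifferentiableWithinAt_univ, he] using this
      have h2 := (hh (e.symm p)).comp p h1.hasMFDerivAt
      rw [ContinuousLinearMap.zero_comp] at h2
      exact hasMFDerivAt_iff_hasFDerivAt.1 h2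
    have hconst : ∀ p ∈ Metric.ball (e x) ε,
        π (f (e.symm p)) = π (f (e.symm (e x))) := by
      intro p hp
      exact (convex_ball (e x) ε).is_const_of_fderivWithin_eq_zero
        (fun q hq => ((hder q hq).differentiableAt).differentiableWithinAt)
        (fun q hq => (hder q hq).hasFDerivWithinAt.fderivWithin (Metric.isOpen_ball.uniqueDiffWithinAt hq))
        hp (Metric.mem_ball_self hε)
    have hnb : e.source ∩ e ⁻¹' Metric.ball (e x) ε ∈ 𝓝 x := by
      refine Filter.inter_mem (extChartAt_source_mem_nhds x) ?_
      exact (continuousAt_extChartAt x).preimage_mem_nhds (Metric.ball_mem_nhds _ hε)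
    filter_upwards [hnb] with y hy
    have h1 : e.symm (e y) = y := e.left_inv hy.1
    have h2 : e.symm (e x) = x := e.left_inv (mem_extChartAt_source x)
    calc π (f y) = π (f (e.symm (e y))) := by rw [h1]
      _ = π (f (e.symm (e x))) := hconst _ hy.2
      _ = π (f x) := by rw [h2]
  -- global: f maps into T
  have hTmem : ∀ y : M, f y ∈ T := by
    have hset : {y : M | π (f y) = 0} = Set.univ := by
      refine IsClopen.eq_univ ⟨?_, ?_⟩ ⟨x₀, by simp [hx₀]⟩
      · exact isClosed_eq (π.continuous.comp hemb.continuous) continuous_const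
      · rw [isOpen_iff_mem_nhds]
        intro y hy
        filter_upwards [hloc y] with z hz
        rw [hz, hy]
    intro y
    have h0 : π (f y) = 0 := by
      have : y ∈ {y : M | π (f y) = 0} := hset ▸ Set.mem_univ y
      exact this
    have h1 : f y ∈ Tᗮᗮ := Submodule.orthogonalProjectionOnto_eq_zero_iff.1 h0
    rwa [Submodule.orthogonal_orthogonal] at h1
  refine ⟨fun v hv => by obtain ⟨x, rfl⟩ := hv; exact hTmem x, ?_⟩
  show IsOpen (Subtype.val ⁻¹' Set.range f : Set T)
  rw [isOpen_iff_mem_nhds]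
  rintro ⟨v, hvT⟩ hv
  obtain ⟨x, hx⟩ : ∃ x, f x = v := hv
  set e := extChartAt (𝓡 m) x with he
  have ha : e x ∈ e.target := (extChartAt (𝓡 m) x).map_source (mem_extChartAt_source x)
  set F : EuclideanSpace ℝ (Fin m) → EuclideanSpace ℝ (Fin d) := fun q => f (e.symm q) with hFdef
  set L : EuclideanSpace ℝ (Fin m) →L[ℝ] EuclideanSpace ℝ (Fin d) :=
    mfderiv (𝓡 m) 𝓘(ℝ, EuclideanSpace ℝ (Fin d)) f x with hLdef
  have hmf : HasMFDerivAt (𝓡 m) 𝓘(ℝ, EuclideanSpace ℝ (Fin d)) f x L := (hfd x).hasMFDerivAt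
  have hFd : HasFDerivAt F L (e x) := by
    have h2 := hmf.2
    rw [writtenInExtChartAt] at h2
    have h5 := h2.hasFDerivAt (by simp)
    simp only [hFdef, he, extChartAt, OpenPartialHomeomorph.extend, chartAt_self_eq, Function.comp_def] at h5 ⊢
    exact h5
  have hsmooth : ContDiffAt ℝ (⊤ : ℕ∞) F (e x) := by
    have h3 := (contMDiffAt_iff.1 (hf x)).2
    simpa [contDiffWithinAt_univ, hFdef, he, extChartAt, OpenPartialHomeomorph.extend,
      Function.comp_def, chartAt_self_eq] using h3
  have hstrict : HasStrictFDerivAt F L (e x) := by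
    have h4 := hsmooth.hasStrictFDerivAt (by simp)
    rwa [hFd.fderiv] at h4
  set pT : EuclideanSpace ℝ (Fin d) →L[ℝ] ↥T := T.orthogonalProjectionOnto with hpT
  set G : EuclideanSpace ℝ (Fin m) → ↥T := fun q => pT (F q) with hGdef
  have hGstrict : HasStrictFDerivAt G (pT.comp L) (e x) := pT.hasStrictFDerivAt.comp _ hstrict
  have hLrange : ∀ w, L w ∈ T := fun w => by
    rw [← hrange x]; exact ⟨w, rfl⟩
  have hbij : Function.Bijective (pT.comp L) := by
    constructor
    · intro u w huw
      apply himm x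
      have h5 : (pT (L u) : EuclideanSpace ℝ (Fin d)) = pT (L w) := congrArg Subtype.val huw
      rwa [((Submodule.starProjection_apply _ _).symm.trans (Submodule.starProjection_eq_self_iff.2 (hLrange u))),
        ((Submodule.starProjection_apply _ _).symm.trans (Submodule.starProjection_eq_self_iff.2 (hLrange w)))] at h5
    · rintro ⟨t, ht⟩
      have ht' : t ∈ LinearMap.range
          (mfderiv (𝓡 m) 𝓘(ℝ, EuclideanSpace ℝ (Fin d)) f x).toLinearMap := by rw [hrange x]; exact ht
      obtain ⟨w, hw⟩ := ht'
      refine ⟨w, Subtype.ext ?_⟩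
      show (pT (L w) : EuclideanSpace ℝ (Fin d)) = t
      rw [show L w = t from hw, ((Submodule.starProjection_apply _ _).symm.trans (Submodule.starProjection_eq_self_iff.2 ht))]
  let Φ : EuclideanSpace ℝ (Fin m) ≃L[ℝ] ↥T :=
    (LinearEquiv.ofBijective ((pT.comp L : _ →L[ℝ] _) : _ →ₗ[ℝ] _) hbij).toContinuousLinearEquiv
  have hΦ : (Φ : EuclideanSpace ℝ (Fin m) →L[ℝ] ↥T) = pT.comp L := by
    ext w
    rfl
  have hmap : Filter.map G (𝓝 (e x)) = 𝓝 (G (e x)) := by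
    have h6 : HasStrictFDerivAt G (Φ : EuclideanSpace ℝ (Fin m) →L[ℝ] ↥T) (e x) := by
      rw [hΦ]; exact hGstrict
    exact h6.map_nhds_eq_of_equiv
  have hFa : F (e x) = v := by
    rw [hFdef]
    simp only [e.left_inv (mem_extChartAt_source x)]
    exact hx
  have hGa : G (e x) = ⟨v, hvT⟩ := Subtype.ext (by
    show (pT (F (e x)) : EuclideanSpace ℝ (Fin d)) = v
    rw [hFa, ((Submodule.starProjection_apply _ _).symm.trans (Submodule.starProjection_eq_self_iff.2 hvT))])
  rw [show (⟨v, hvT⟩ : ↥T) = G (e x) from hGa.symm, ← hmap, Filter.mem_map]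
  refine Filter.mem_of_superset ((isOpen_extChartAt_target x).mem_nhds ha) ?_
  intro q hq
  show G q ∈ Subtype.val ⁻¹' Set.range f
  have h7 : (G q : EuclideanSpace ℝ (Fin d)) = F q :=
    ((Submodule.starProjection_apply _ _).symm.trans (Submodule.starProjection_eq_self_iff.2 (hTmem (e.symm q))))
  rw [Set.mem_preimage, h7]
  exact ⟨e.symm q, rfl⟩
end
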